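/- Let G = (V,A) be a looped digraph, V′ ⊆ V, and h a function as in the definition of A(V′,h). If W₂ ≠ V′, then A(V′,h) = 0. -/
import Mathlib


open Finset

/-! ### Permanents -/

/-- The permanent of a square matrix. -/
noncomputable def perm {ι R : Type*} [Fintype ι] [DecidableEq ι] [CommRing R]
    (M : Matrix ι ι R) : R :=
  ∑ σ : Equiv.Perm ι, ∏ i, M i (σ i)

/-! ### Chord diagrams -/

/-- A chord diagram with `n` chords: a partition of `{1,…,2n}` into `n` two-element
subsets (chords), each recorded by its left endpoint `l i` and right endpoint `r i`,
with the chords numbered in increasing order of their left endpoints. -/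
structure ChordDiagram (n : ℕ) where
  l : Fin n → Fin (2 * n)
  r : Fin n → Fin (2 * n)
  lr : ∀ i, l i < r i
  mono : StrictMono l
  cover : ∀ q : Fin (2 * n), ∃! i : Fin n, l i = q ∨ r i = q

namespace ChordDiagram

variable {n : ℕ}

/-- Chords `i` and `j` intersect. -/
abbrev Intersect (D : ChordDiagram n) (i j : Fin n) : Prop :=
  (D.l i < D.l j ∧ D.l j < D.r i ∧ D.r i < D.r j) ∨
  (D.l j < D.l i ∧ D.l i < D.r j ∧ D.r j < D.r i)

/-- Chord `i` is completely contained in chord `j`. -/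
abbrev Contained (D : ChordDiagram n) (i j : Fin n) : Prop :=
  D.l j < D.l i ∧ D.r i < D.r j

/-- The five colors `I, B⁺₀, B⁺₁, B⁻₀, B⁻₁` (`true` encodes subscript `1`). -/
inductive JCol where
  | I : JCol
  | Bp : Bool → JCol
  | Bm : Bool → JCol
  deriving DecidableEq, Fintype

/-- The contribution `δ` of a left endpoint of a chord with a given color. -/
def lsign : JCol → ℤ
  | .Bp true => 1
  | .Bm true => -1
  | _ => 0

/-- `δ(q)` for a coloring `ρ` of the chords of `D`. -/
def delta (D : ChordDiagram n) (ρ : Fin n → JCol) (q : Fin (2 * n)) : ℤ :=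
  ∑ v : Fin n, ((if D.l v = q then lsign (ρ v) else 0) +
                (if D.r v = q then - lsign (ρ v) else 0))

/-- `Σ_{q < p} δ(q)`. -/
def kOf (D : ChordDiagram n) (ρ : Fin n → JCol) (p : Fin (2 * n)) : ℤ :=
  ∑ q ∈ univ.filter (fun q => q < p), D.delta ρ q

/-- The weight `ω_ρ(v)` of chord `v` under the coloring `ρ`. -/
noncomputable def omega (D : ChordDiagram n) (ρ : Fin n → JCol) (v : Fin n) :
    Polynomial ℚ :=
  match ρ v with
  | .I => Polynomial.X + 2
  | .Bp ε => - (-1 : Polynomial ℚ) ^ (if ε then 1 else 0) *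
      (1 + ((D.kOf ρ (D.l v) : ℤ) : Polynomial ℚ)) *
      (Polynomial.X + 1 - ((D.kOf ρ (D.r v) : ℤ) : Polynomial ℚ))
  | .Bm ε => - (-1 : Polynomial ℚ) ^ (if ε then 1 else 0) *
      (1 + ((D.kOf ρ (D.r v) : ℤ) : Polynomial ℚ)) *
      (Polynomial.X + 1 - ((D.kOf ρ (D.l v) : ℤ) : Polynomial ℚ))

/-- The colored Jones weight system `W_J(D) ∈ ℚ[λ]` (with `λ = X`). -/
noncomputable def WJ (D : ChordDiagram n) : Polynomial ℚ :=
  ∑ ρ : Fin n → JCol, ∏ v : Fin n, D.omega ρ v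

/-- The intersection matrix `IM(D)` with entries `sign(i−j)` for intersecting chords. -/
def IM (D : ChordDiagram n) : Matrix (Fin n) (Fin n) ℚ := fun i j =>
  if D.Intersect i j then (if j < i then 1 else if i < j then -1 else 0) else 0

/-- The `3×3` block `A₀`. -/
noncomputable def A0 : Matrix (Fin 3) (Fin 3) (Polynomial ℚ) :=
  !![Polynomial.X + 2, 0, 0; 0, Polynomial.X + 2, 1; Polynomial.X, -Polynomial.X - 2, 1]

/-- The `3×3` block `A₊`. -/
noncomputable def Aplus : Matrix (Fin 3) (Fin 3) (Polynomial ℚ) := !![1, 1, 0; 0, 0, 0; 0, 0, 0]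

/-- The `3×3` block `A₋`. -/
noncomputable def Aminus : Matrix (Fin 3) (Fin 3) (Polynomial ℚ) := !![0, 0, 0; -1, -1, 0; 0, 0, 0]

/-- The `3×3` block `A_c`. -/
noncomputable def Acont : Matrix (Fin 3) (Fin 3) (Polynomial ℚ) := !![1, 1, 0; -1, -1, 0; 0, 0, 0]

/-- The blown-up intersection matrix `IM_J(D)`, a `3n×3n` matrix of `3×3` blocks. -/
noncomputable def IMJ (D : ChordDiagram n) :
    Matrix (Fin n × Fin 3) (Fin n × Fin 3) (Polynomial ℚ) := fun p q =>
  (if p.1 = q.1 then A0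
   else if q.1 < p.1 ∧ D.Intersect p.1 q.1 then Aplus
   else if p.1 < q.1 ∧ D.Intersect p.1 q.1 then Aminus
   else if ¬ D.Intersect p.1 q.1 ∧ D.Contained p.1 q.1 then Acont
   else 0) p.2 q.2

end ChordDiagram

/-! ### Looped digraphs -/

/-- A looped digraph: a finite digraph (arcs a set of ordered pairs) with a loop at
every vertex and a distinguished set of red non-loop arcs. -/
structure LoopedDigraph (V : Type*) [Fintype V] [DecidableEq V] where
  arcs : Finset (V × V)
  red : Finset (V × V)
  loop_mem : ∀ v : V, (v, v) ∈ arcs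
  red_sub : red ⊆ arcs
  red_no_loop : ∀ v : V, (v, v) ∉ red

/-- A thickened arc `(e, b)`, where `e` is an arc of the digraph and `b : Bool` records:
for an uncolored arc, whether it is thickened at its tail (`true`) or head (`false`);
for a red arc (always thickened at its tail `e.1`), whether it keeps its original
orientation (`true`) or is reversed (`false`). Loops always carry `b = true`. -/
abbrev TArc (V : Type*) := (V × V) × Bool

variable {V : Type*} [Fintype V] [DecidableEq V]

/-- The degree of `v` in a collection `K` of thickened arcs: the number of arc-ends of
`K` at `v` (a loop contributing `2`). -/
def degAt (K : Finset (TArc V)) (v : V) : ℕ :=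
  ∑ t ∈ K, ((if t.1.1 = v then 1 else 0) + (if t.1.2 = v then 1 else 0))

/-- `deg₄(K)`: the number of vertices of degree `4` in `K`. -/
def deg4 (K : Finset (TArc V)) : ℕ := (univ.filter fun v => degAt K v = 4).card

namespace LoopedDigraph

variable (G : LoopedDigraph V)

/-- The initial vertex of a thickened arc, as oriented in the collection. -/
def src (t : TArc V) : V := if t.1 ∈ G.red ∧ t.2 = false then t.1.2 else t.1.1

/-- The terminal vertex of a thickened arc, as oriented in the collection. -/
def dst (t : TArc V) : V := if t.1 ∈ G.red ∧ t.2 = false then t.1.1 else t.1.2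

/-- The vertex at which a thickened arc is thickened. -/
def tvert (t : TArc V) : V := if t.1 ∈ G.red then t.1.1 else if t.2 then t.1.1 else t.1.2

/-- The number of arcs of `K` thickened at `v`. -/
def thickAt (K : Finset (TArc V)) (v : V) : ℕ := (K.filter fun t => G.tvert t = v).card

/-- The number of arcs of `K` thickened at `v` that leave `v` (a loop counting as
leaving). -/
def outThickAt (K : Finset (TArc V)) (v : V) : ℕ :=
  (K.filter fun t => G.tvert t = v ∧ G.src t = v).card

/-- An acceptable object for a looped digraph. -/
structure IsAcceptable (K : Finset (TArc V)) : Prop where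
  mem_arcs : ∀ t ∈ K, t.1 ∈ G.arcs
  loop_thick : ∀ t ∈ K, t.1.1 = t.1.2 → t.2 = true
  deg024 : ∀ v, degAt K v = 0 ∨ degAt K v = 2 ∨ degAt K v = 4
  half_thick : ∀ v, 2 * G.thickAt K v = degAt K v
  balance : ∀ v, G.thickAt K v = 2 → G.outThickAt K v = 1

/-- `a(K)`: the number of arcs of `K` thickened at their initial vertex (loops count). -/
def aK (K : Finset (TArc V)) : ℕ := (K.filter fun t => G.src t = G.tvert t).card

open Classical in
/-- The partition function `J(G)`, with `λ ↦ lam` and `x_e ↦ x e`. -/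
noncomputable def J {R : Type*} [CommRing R] (lam : R) (x : V × V → R) : R :=
  ∑ K : Finset (TArc V),
    if G.IsAcceptable K then
      2 ^ deg4 K * (lam + 2) ^ (Fintype.card V - deg4 K) *
        (∏ t ∈ K, x t.1) * (-1 : R) ^ G.aK K
    else 0

/-- `s(w) = δ_w · ε_w` for a partial coloring `c` (with support the set `V′`). -/
def sInt (c : V → Option (Bool × Bool)) (w : V) : ℤ :=
  match c w with
  | none => 0
  | some (δ, ε) => (if δ then 1 else -1) * (if ε then 1 else 0)

/-- `z_v(e)` (for `bar = false`) and `z̄_v(e)` (for `bar = true`). -/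
def zfun {R : Type*} [CommRing R] (x : V × V → R) (c : V → Option (Bool × Bool))
    (bar : Bool) (v : V) (e : V × V) : R :=
  match c v with
  | none => 0
  | some (δ, _) =>
    if e ∈ G.red then
      (if e.1 = v then ((sInt c e.2 : ℤ) : R) * x e else 0)
    else if e.1 = v then (if δ = bar then ((sInt c e.2 : ℤ) : R) * x e else 0)
    else if e.2 = v then (if δ ≠ bar then ((sInt c e.1 : ℤ) : R) * x e else 0)
    else 0

/-- The weight `ω′_c(v)`. -/
noncomputable def omegaC {R : Type*} [CommRing R] (lam : R) (x : V × V → R)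
    (c : V → Option (Bool × Bool)) (v : V) : R :=
  match c v with
  | none => 0
  | some (_, ε) =>
    - (-1 : R) ^ (if ε then 1 else 0) *
      (1 + ∑ e ∈ G.arcs, G.zfun x c false v e) *
      (lam + 1 - ∑ e ∈ G.arcs, G.zfun x c true v e)

/-- The state sum `J′(G)`: the sum over `V′ ⊆ V` and colorings `c` of `V′` is encoded
as a sum over partial colorings `c : V → Option (Bool × Bool)` with support `V′`. -/
noncomputable def J' {R : Type*} [CommRing R] (lam : R) (x : V × V → R) : R :=
  ∑ c : V → Option (Bool × Bool),
    (lam + 2) ^ (univ.filter fun v => c v = none).card *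
      ∏ v ∈ univ.filter (fun v => (c v).isSome = true), G.omegaC lam x c v

end LoopedDigraph

/-! ### The labeled intersection digraph of a chord diagram -/

open ChordDiagram in
/-- The labeled intersection digraph `LID(D)` of a chord diagram `D`. -/
def LID {n : ℕ} (D : ChordDiagram n) : LoopedDigraph (Fin n) where
  arcs := univ.filter fun p : Fin n × Fin n =>
    p.1 = p.2 ∨ (p.1 < p.2 ∧ D.Intersect p.1 p.2) ∨ D.Contained p.1 p.2
  red := univ.filter fun p : Fin n × Fin n => D.Contained p.1 p.2
  loop_mem := by intro v; simp
  red_sub := by intro p hp; simp only [mem_filter, mem_univ, true_and] at hp ⊢; tauto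
  red_no_loop := by
    intro v hv
    simp only [mem_filter, mem_univ, true_and] at hv
    exact lt_irrefl _ hv.1

/-! ### The data `(V′, h)` and the state sum `A(V′, h)` -/

/-- The data of a function `h` assigning to every `v ∈ V′` a set of at most two arcs of
`G` incident with `v`, every red arc of `h v` leaving `v` (and `h v = ∅` off `V′`). -/
structure HData (G : LoopedDigraph V) (V' : Finset V) where
  h : V → Finset (V × V)
  sub : ∀ v, h v ⊆ G.arcs
  card_le : ∀ v, (h v).card ≤ 2
  incident : ∀ v, ∀ e ∈ h v, e.1 = v ∨ e.2 = v
  red_out : ∀ v, ∀ e ∈ h v, e ∈ G.red → e.1 = v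
  outside : ∀ v, v ∉ V' → h v = ∅

/-- The number of arc-ends at `v` among a set of thickened arcs `(e, w)`. -/
def endCountAt (S : Finset ((V × V) × V)) (v : V) : ℕ :=
  ∑ p ∈ S, ((if p.1.1 = v then 1 else 0) + (if p.1.2 = v then 1 else 0))

namespace HData

variable {G : LoopedDigraph V} {V' : Finset V} (H : HData G V')

/-- `W₁ = {v ∈ V′ : |h(v)| = 2}`. -/
def W1 : Finset V := V'.filter fun v => (H.h v).card = 2

/-- `W₂ = {v ∈ V′ : |h(v)| ≥ 1}`. -/
def W2 : Finset V := V'.filter fun v => 1 ≤ (H.h v).card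

/-- `h(W₂)`: the set of thickened arcs `(e, v)` with `v ∈ W₂` and `e ∈ h v`. -/
def hW2 : Finset ((V × V) × V) :=
  univ.filter fun p => p.2 ∈ H.W2 ∧ p.1 ∈ H.h p.2

/-- The functions `g` on `S` with `g v ∈ h v`, encoded as singleton-valued selections
`gs : V → Finset (V × V)` (with `gs v = ∅` off `S`). -/
def choices (S : Finset V) : Finset (V → Finset (V × V)) :=
  univ.filter fun gs => ∀ v, gs v ⊆ H.h v ∧
    (v ∈ S → (gs v).card = 1) ∧ (v ∉ S → gs v = ∅)

/-- The summand `B(c, V₂′, g)`; here `g` is encoded by the selection `gs` on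
`W₁ ∪ V₂′` and the complementary function `f` (on `W₁ ∪ V₁′`, `V₁′ = W₂∖(W₁∪V₂′)`)
is encoded by the complementary selection `h v ∖ gs v`. -/
noncomputable def Bterm {R : Type*} [CommRing R] (lam : R) (x : V × V → R)
    (c : V → Option (Bool × Bool)) (V2 : Finset V) (gs : V → Finset (V × V)) : R :=
  (-1 : R) ^ (∑ v ∈ V', ((c v).elim 0 fun p => if p.2 then 1 else 0 : ℕ)) *
  (-1 : R) ^ (H.W1 ∪ V2).card *
  (lam + 1) ^ (V' \ (H.W1 ∪ V2)).card *
  (∏ v ∈ H.W1 ∪ V2, ∏ e ∈ gs v, G.zfun x c true v e) *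
  (∏ v ∈ H.W1 ∪ (H.W2 \ (H.W1 ∪ V2)), ∏ e ∈ H.h v \ gs v, G.zfun x c false v e)

open Classical in
/-- The state sum `A(V′, h)`. -/
noncomputable def Aval {R : Type*} [CommRing R] (lam : R) (x : V × V → R) : R :=
  ∑ c : V → Option (Bool × Bool),
    if (∀ v, (c v).isSome = true ↔ v ∈ V') then
      ∑ V2 ∈ (H.W2 \ H.W1).powerset, ∑ gs ∈ H.choices (H.W1 ∪ V2),
        H.Bterm lam x c V2 gs
    else 0

end HData

/-! ### Good collections and the state sum `C(X, V′, K)` -/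

namespace LoopedDigraph

/-- A collection of thickened arcs good on `V′`. -/
structure IsGood (G : LoopedDigraph V) (V' : Finset V) (K : Finset (TArc V)) : Prop where
  mem_arcs : ∀ t ∈ K, t.1 ∈ G.arcs
  loop_thick : ∀ t ∈ K, t.1.1 = t.1.2 → t.2 = true
  red_orig : ∀ t ∈ K, t.1 ∈ G.red → t.2 = true
  deg_mem : ∀ v ∈ V', degAt K v = 2 ∨ degAt K v = 4
  deg_out : ∀ v, v ∉ V' → degAt K v = 0
  half_thick : ∀ v, 2 * G.thickAt K v = degAt K v
  unc_opp : ∀ t ∈ K, ∀ s ∈ K, t ≠ s → t.1 ∉ G.red → s.1 ∉ G.red →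
    G.tvert t = G.tvert s → ((G.src t = G.tvert t) ↔ ¬ (G.src s = G.tvert s))

/-- The set `W₁` of degree-4 vertices of a collection `K`. -/
def KW1 (G : LoopedDigraph V) (K : Finset (TArc V)) : Finset V :=
  univ.filter fun v => degAt K v = 4

/-- The arcs of `K` thickened at `v`. -/
def thickedAt (G : LoopedDigraph V) (K : Finset (TArc V)) (v : V) : Finset (TArc V) :=
  K.filter fun t => G.tvert t = v

/-- The functions `g′` assigning to each degree-4 vertex one of the two arcs of `K`
thickened at it, encoded as singleton-valued selections. -/
def kchoices (G : LoopedDigraph V) (K : Finset (TArc V)) : Finset (V → Finset (TArc V)) :=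
  univ.filter fun cs => ∀ v, cs v ⊆ G.thickedAt K v ∧
    (v ∈ KW1 G K → (cs v).card = 1) ∧ (v ∉ KW1 G K → cs v = ∅)

open Classical in
/-- The state sum `C(X, V′, K)`. -/
noncomputable def Cval {R : Type*} [CommRing R] (G : LoopedDigraph V) (V' : Finset V)
    (K : Finset (TArc V)) (X : Finset V) (x : V × V → R) : R :=
  ∑ cs ∈ kchoices G K,
    (-1 : R) ^ (KW1 G K).card * (-1 : R) ^ X.card *
    ∑ c : V → Option (Bool × Bool),
      if (∀ v, (c v).isSome = true ↔ v ∈ V') then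
        (∏ v ∈ KW1 G K ∪ X,
          ∏ t ∈ (if v ∈ KW1 G K then cs v else G.thickedAt K v), G.zfun x c true v t.1) *
        (∏ v ∈ V' \ X, ∏ t ∈ G.thickedAt K v \ cs v, G.zfun x c false v t.1)
      else 0

/-- A connected acceptable object: one with no single loops. -/
def IsConnectedObj (G : LoopedDigraph V) (K : Finset (TArc V)) : Prop :=
  G.IsAcceptable K ∧ ∀ t ∈ K, t.1.1 = t.1.2 → degAt K t.1.1 ≠ 2

/-- A super acceptable object: connected, and every vertex has degree at least 2. -/
def IsSuper (G : LoopedDigraph V) (K : Finset (TArc V)) : Prop :=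
  G.IsConnectedObj K ∧ ∀ v, 2 ≤ degAt K v

end LoopedDigraph


/-! ### Auxiliary machinery for the corollary -/

namespace AuxW2

open LoopedDigraph

variable {V : Type*} [Fintype V] [DecidableEq V]

/-- The "relevant" endpoint of an arc `e` viewed from vertex `v`. -/
def relEnd (v : V) (e : V × V) : V := if e.1 = v then e.2 else e.1

/-- `sInt` as a function of the value of the coloring. -/
def sA (a : Option (Bool × Bool)) : ℤ :=
  match a with
  | none => 0
  | some (d, e) => (if d then 1 else -1) * (if e then 1 else 0)

lemma sInt_eq (c : V → Option (Bool × Bool)) (w : V) : sInt c w = sA (c w) := by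
  unfold sInt sA; rfl

lemma sInt_update_self (c : V → Option (Bool × Bool)) (u : V) (a : Option (Bool × Bool)) :
    sInt (Function.update c u a) u = sA a := by
  rw [sInt_eq, Function.update_self]

lemma sInt_update_ne (c : V → Option (Bool × Bool)) (u w : V) (a : Option (Bool × Bool))
    (h : w ≠ u) : sInt (Function.update c u a) w = sInt c w := by
  rw [sInt_eq, sInt_eq, Function.update_of_ne h]

/-- The part of `zfun` that does not involve the sign of the relevant endpoint. -/
def zbase {R : Type*} [CommRing R] (G : LoopedDigraph V) (x : V × V → R)
    (c : V → Option (Bool × Bool)) (bar : Bool) (v : V) (e : V × V) : R :=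
  match c v with
  | none => 0
  | some (d, _) =>
    if e ∈ G.red then (if e.1 = v then x e else 0)
    else if e.1 = v then (if d = bar then x e else 0)
    else if e.2 = v then (if d ≠ bar then x e else 0)
    else 0

lemma zfun_eq {R : Type*} [CommRing R] (G : LoopedDigraph V) (x : V × V → R)
    (c : V → Option (Bool × Bool)) (bar : Bool) (v : V) (e : V × V) :
    G.zfun x c bar v e = ((sInt c (relEnd v e) : ℤ) : R) * zbase G x c bar v e := by
  unfold LoopedDigraph.zfun zbase relEnd
  rcases hc : c v with _ | ⟨d, ε⟩
  · simp
  · by_cases hr : e ∈ G.red <;> by_cases h1 : e.1 = v <;> by_cases h2 : e.2 = v <;>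
      by_cases hd : d = bar <;> simp [hr, h1, h2, hd] <;> ring

lemma zbase_update_ne {R : Type*} [CommRing R] (G : LoopedDigraph V) (x : V × V → R)
    (c : V → Option (Bool × Bool)) (bar : Bool) (u v : V) (e : V × V)
    (a : Option (Bool × Bool)) (h : v ≠ u) :
    zbase G x (Function.update c u a) bar v e = zbase G x c bar v e := by
  unfold zbase
  rw [Function.update_of_ne h]

lemma zbase_update_self {R : Type*} [CommRing R] (G : LoopedDigraph V) (x : V × V → R)
    (c : V → Option (Bool × Bool)) (bar : Bool) (u : V) (e : V × V) (d ε : Bool) :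
    zbase G x (Function.update c u (some (d, ε))) bar u e =
      (if e ∈ G.red then (if e.1 = u then x e else 0)
        else if e.1 = u then (if d = bar then x e else 0)
        else if e.2 = u then (if d ≠ bar then x e else 0)
        else 0) := by
  unfold zbase
  rw [Function.update_self]

/-- The reference factor:`zfun` with the sign of `u` normalized to `1`. -/
def zsel {R : Type*} [CommRing R] (G : LoopedDigraph V) (x : V × V → R)
    (c : V → Option (Bool × Bool)) (u : V) (bar : Bool) (v : V) (e : V × V) : R :=
  (if relEnd v e = u then 1 else ((sInt c (relEnd v e) : ℤ) : R)) * zbase G x c bar v e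

lemma zfun_update_eq {R : Type*} [CommRing R] (G : LoopedDigraph V) (x : V × V → R)
    (c : V → Option (Bool × Bool)) (bar : Bool) (u : V) (a : Option (Bool × Bool))
    (v : V) (e : V × V) (hv : v ≠ u) :
    G.zfun x (Function.update c u a) bar v e =
      ((sA a : ℤ) : R) ^ (if relEnd v e = u then 1 else 0) * zsel G x c u bar v e := by
  rw [zfun_eq, zbase_update_ne G x c bar u v e a hv, zsel]
  by_cases h : relEnd v e = u
  · rw [h, sInt_update_self, if_pos rfl, if_pos rfl, pow_one, one_mul]
  · rw [sInt_update_ne c u _ a h, if_neg h, if_neg h, pow_zero, one_mul]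

lemma prod_zfun_update {R : Type*} [CommRing R] (G : LoopedDigraph V) (x : V × V → R)
    (c : V → Option (Bool × Bool)) (bar : Bool) (u : V) (a : Option (Bool × Bool))
    (A : Finset V) (t : V → Finset (V × V)) (hu : u ∉ A) :
    (∏ v ∈ A, ∏ e ∈ t v, G.zfun x (Function.update c u a) bar v e)
      = ((sA a : ℤ) : R) ^ (∑ v ∈ A, ∑ e ∈ t v, if relEnd v e = u then 1 else 0) *
        ∏ v ∈ A, ∏ e ∈ t v, zsel G x c u bar v e := by
  rw [← Finset.prod_pow_eq_pow_sum, ← Finset.prod_mul_distrib]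
  refine Finset.prod_congr rfl fun v hv => ?_
  have hvu : v ≠ u := fun h => hu (h ▸ hv)
  rw [← Finset.prod_pow_eq_pow_sum, ← Finset.prod_mul_distrib]
  exact Finset.prod_congr rfl fun e _ => zfun_update_eq G x c bar u a v e hvu

/-- Scalar sum over the four colorings of a vertex. -/
lemma sigma_zero {R : Type*} [CommRing R] (M : ℕ) (hM : M = 0 ∨ Odd M) :
    ∑ s : Bool × Bool, (-1 : R) ^ (if s.2 then 1 else 0) * ((sA (some s) : ℤ) : R) ^ M = 0 := by
  rw [Fintype.sum_prod_type]
  simp only [Fintype.sum_bool]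
  rcases hM with hM | hM
  · subst hM; simp [sA]
  · have h0 : M ≠ 0 := by rcases hM with ⟨k, hk⟩; omega
    have h1 : (-1 : R) ^ M = -1 := Odd.neg_one_pow hM
    simp only [sA]
    norm_num [zero_pow h0]
    simp [h1]

/-- Sum over colorings when the summand only depends on the `δ`-part. -/
lemma sum_eps_zero {R : Type*} [CommRing R] (W : Bool → R) :
    ∑ s : Bool × Bool, (-1 : R) ^ (if s.2 then 1 else 0) * W s.1 = 0 := by
  rw [Fintype.sum_prod_type]
  simp only [Fintype.sum_bool]
  norm_num

/-- The `δ`-dependent part of a `z`-factor at the vertex `u` itself. -/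
def zb {R : Type*} [CommRing R] (G : LoopedDigraph V) (x : V × V → R) (u : V)
    (e : V × V) (b d : Bool) : R :=
  if e ∈ G.red then (if e.1 = u then x e else 0)
  else if e.1 = u then (if d = b then x e else 0)
  else if e.2 = u then (if d ≠ b then x e else 0)
  else 0

lemma zfun_update_self_eq {R : Type*} [CommRing R] (G : LoopedDigraph V) (x : V × V → R)
    (c : V → Option (Bool × Bool)) (b : Bool) (u : V) (e : V × V) (p : Bool × Bool) :
    G.zfun x (Function.update c u (some p)) b u e =
      ((sA (some p) : ℤ) : R) ^ (if relEnd u e = u then 1 else 0) *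
        ((if relEnd u e = u then 1 else ((sInt c (relEnd u e) : ℤ) : R)) *
          zb G x u e b p.1) := by
  obtain ⟨d, ε⟩ := p
  rw [zfun_eq, zbase_update_self G x c b u e d ε]
  show _ * zb G x u e b d = _
  by_cases h : relEnd u e = u
  · rw [if_pos h, if_pos h, h, sInt_update_self, pow_one, one_mul]
  · rw [if_neg h, if_neg h, sInt_update_ne c u _ _ h, pow_zero, one_mul]

lemma zb_pair_const {R : Type*} [CommRing R] (G : LoopedDigraph V) (x : V × V → R)
    (u : V) (e1 e2 : V × V) (d : Bool) :
    zb G x u e1 true d * zb G x u e2 false d + zb G x u e2 true d * zb G x u e1 false d =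
      zb G x u e1 true true * zb G x u e2 false true +
        zb G x u e2 true true * zb G x u e1 false true := by
  cases d
  · simp only [zb, ne_eq, Bool.false_eq_true, Bool.true_eq_false, not_false_eq_true,
      not_true_eq_false, if_true, if_false]
    split_ifs <;> ring
  · rfl

section HD

variable {G : LoopedDigraph V} {V' : Finset V} (H : HData G V')

lemma W1_subset : H.W1 ⊆ H.W2 := by
  intro v hv
  simp only [HData.W1, HData.W2, Finset.mem_filter] at hv ⊢
  exact ⟨hv.1, by omega⟩

lemma W2_subset : H.W2 ⊆ V' := fun v hv => (Finset.mem_filter.mp hv).1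

lemma card_h_W1 {v : V} (hv : v ∈ H.W1) : (H.h v).card = 2 := (Finset.mem_filter.mp hv).2

lemma card_h_single {v : V} (hv : v ∈ H.W2) (hv1 : v ∉ H.W1) : (H.h v).card = 1 := by
  have h1 := (Finset.mem_filter.mp hv).2
  have h2 := H.card_le v
  have h3 : ¬(H.h v).card = 2 :=
    fun h => hv1 (Finset.mem_filter.mpr ⟨(Finset.mem_filter.mp hv).1, h⟩)
  omega

lemma mem_choices {S : Finset V} {gs : V → Finset (V × V)} :
    gs ∈ H.choices S ↔
      ∀ v, gs v ⊆ H.h v ∧ (v ∈ S → (gs v).card = 1) ∧ (v ∉ S → gs v = ∅) := by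
  simp [HData.choices]

/-- The number of thickened arcs of `h(W₂)` whose relevant endpoint is `u`. -/
def Mcount (u : V) : ℕ :=
  ∑ v ∈ H.W2, ∑ e ∈ H.h v, if relEnd v e = u then 1 else 0

lemma count_split {V2 : Finset V} (hV2 : V2 ⊆ H.W2 \ H.W1) {gs : V → Finset (V × V)}
    (hgs : gs ∈ H.choices (H.W1 ∪ V2)) (u : V) :
    ((∑ v ∈ H.W1 ∪ V2, ∑ e ∈ gs v, if relEnd v e = u then 1 else 0) +
      ∑ v ∈ H.W1 ∪ (H.W2 \ (H.W1 ∪ V2)), ∑ e ∈ H.h v \ gs v, if relEnd v e = u then 1 else 0)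
      = Mcount H u := by
  rw [mem_choices] at hgs
  have hd1 : Disjoint H.W1 V2 := Finset.disjoint_left.mpr
    (fun v hv hv2 => (Finset.mem_sdiff.mp (hV2 hv2)).2 hv)
  have hd2 : Disjoint H.W1 (H.W2 \ (H.W1 ∪ V2)) := Finset.disjoint_left.mpr
    (fun v hv hv2 => (Finset.mem_sdiff.mp hv2).2 (Finset.mem_union_left _ hv))
  have hsub : H.W1 ∪ V2 ⊆ H.W2 := Finset.union_subset (W1_subset H)
    (fun v hv => (Finset.mem_sdiff.mp (hV2 hv)).1)
  rw [Finset.sum_union hd1, Finset.sum_union hd2]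
  have key : (∑ v ∈ H.W1, ∑ e ∈ gs v, if relEnd v e = u then 1 else 0) +
      (∑ v ∈ H.W1, ∑ e ∈ H.h v \ gs v, if relEnd v e = u then 1 else 0) =
      ∑ v ∈ H.W1, ∑ e ∈ H.h v, if relEnd v e = u then 1 else 0 := by
    rw [← Finset.sum_add_distrib]
    refine Finset.sum_congr rfl fun v hv => ?_
    rw [add_comm]
    exact Finset.sum_sdiff ((hgs v).1)
  have e2 : (∑ v ∈ V2, ∑ e ∈ gs v, if relEnd v e = u then 1 else 0) =
      ∑ v ∈ V2, ∑ e ∈ H.h v, if relEnd v e = u then 1 else 0 := by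
    refine Finset.sum_congr rfl fun v hv => ?_
    have hv' := Finset.mem_sdiff.mp (hV2 hv)
    have : gs v = H.h v := Finset.eq_of_subset_of_card_le (hgs v).1
      (by rw [(hgs v).2.1 (Finset.mem_union_right _ hv), card_h_single H hv'.1 hv'.2])
    rw [this]
  have e3 : (∑ v ∈ H.W2 \ (H.W1 ∪ V2), ∑ e ∈ H.h v \ gs v, if relEnd v e = u then 1 else 0) =
      ∑ v ∈ H.W2 \ (H.W1 ∪ V2), ∑ e ∈ H.h v, if relEnd v e = u then 1 else 0 := by
    refine Finset.sum_congr rfl fun v hv => ?_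
    rw [(hgs v).2.2 (Finset.mem_sdiff.mp hv).2, Finset.sdiff_empty]
  rw [e2, e3]
  unfold Mcount
  have hre : (∑ v ∈ H.W2, ∑ e ∈ H.h v, if relEnd v e = u then 1 else 0) =
      ((∑ v ∈ H.W2 \ (H.W1 ∪ V2), ∑ e ∈ H.h v, if relEnd v e = u then 1 else 0) +
        ∑ v ∈ H.W1 ∪ V2, ∑ e ∈ H.h v, if relEnd v e = u then 1 else 0) :=
    (Finset.sum_sdiff hsub).symm
  rw [hre, Finset.sum_union hd1]
  omega

lemma sum_Mcount : ∑ u : V, Mcount H u = 2 * H.W1.card + (H.W2 \ H.W1).card := by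
  unfold Mcount
  rw [Finset.sum_comm]
  have : ∀ v ∈ H.W2, (∑ u : V, ∑ e ∈ H.h v, if relEnd v e = u then 1 else 0)
      = (H.h v).card := by
    intro v _
    rw [Finset.sum_comm]
    refine Eq.trans (Finset.sum_congr rfl fun e _ => ?_) (by rw [Finset.card_eq_sum_ones])
    rw [Finset.sum_ite_eq Finset.univ (relEnd v e) (fun _ => 1), if_pos (Finset.mem_univ _)]
  rw [Finset.sum_congr rfl this, ← Finset.sum_sdiff (W1_subset H)]
  rw [Finset.sum_congr rfl (fun v hv => card_h_W1 H hv),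
    Finset.sum_congr rfl (fun (v : V) (hv : v ∈ H.W2 \ H.W1) =>
      card_h_single H (Finset.mem_sdiff.mp hv).1 (Finset.mem_sdiff.mp hv).2)]
  simp [Finset.sum_const, mul_comm]
  omega

lemma exists_bad (hne : H.W2 ≠ V') :
    (∃ v ∈ H.W2, ∃ e ∈ H.h v, relEnd v e ∉ V') ∨
    (∃ u, (u ∈ V' ∧ u ∉ H.W2 ∧ (Mcount H u = 0 ∨ Odd (Mcount H u))) ∨
          (u ∈ H.W2 ∧ u ∉ H.W1 ∧ Mcount H u = 0) ∨
          (u ∈ H.W1 ∧ (Mcount H u = 0 ∨ Odd (Mcount H u)))) := by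
  by_contra hcon
  push_neg at hcon
  obtain ⟨hesc, hbad⟩ := hcon
  have hout : ∀ u, u ∉ V' → Mcount H u = 0 := by
    intro u hu
    by_contra h0
    have hex : ∃ v ∈ H.W2, ∃ e ∈ H.h v, relEnd v e = u := by
      by_contra hno; push_neg at hno
      exact h0 (Finset.sum_eq_zero fun v hv =>
        Finset.sum_eq_zero fun e he => if_neg (hno v hv e he))
    obtain ⟨v, hv, e, he, hrel⟩ := hex
    exact hu (hrel ▸ hesc v hv e he)
  have ge2 : ∀ (u : V), (Mcount H u ≠ 0 ∧ ¬Odd (Mcount H u)) → 2 ≤ Mcount H u := by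
    intro u h
    rcases Nat.even_or_odd (Mcount H u) with he | ho
    · obtain ⟨k, hk⟩ := he; omega
    · exact absurd ho h.2
  have hW1b : ∀ u ∈ H.W1, 2 ≤ Mcount H u := by
    intro u hu
    exact ge2 u ((hbad u).2.2 hu)
  have hVW2b : ∀ u ∈ V' \ H.W2, 2 ≤ Mcount H u := by
    intro u hu
    have hu' := Finset.mem_sdiff.mp hu
    exact ge2 u ((hbad u).1 hu'.1 hu'.2)
  have hW2W1b : ∀ u ∈ H.W2 \ H.W1, 1 ≤ Mcount H u := by
    intro u hu
    have hu' := Finset.mem_sdiff.mp hu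
    have := (hbad u).2.1 hu'.1 hu'.2
    omega
  have htot := sum_Mcount H
  have h1 : ∑ u : V, Mcount H u = ∑ u ∈ V', Mcount H u :=
    (Finset.sum_subset (Finset.subset_univ V') (fun u _ hu => hout u hu)).symm
  have h2 : ∑ u ∈ V', Mcount H u =
      (∑ u ∈ V' \ H.W2, Mcount H u) + ∑ u ∈ H.W2, Mcount H u :=
    (Finset.sum_sdiff (W2_subset H)).symm
  have h3 : ∑ u ∈ H.W2, Mcount H u =
      (∑ u ∈ H.W2 \ H.W1, Mcount H u) + ∑ u ∈ H.W1, Mcount H u :=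
    (Finset.sum_sdiff (W1_subset H)).symm
  have b1 : H.W1.card * 2 ≤ ∑ u ∈ H.W1, Mcount H u := by
    calc H.W1.card * 2 = H.W1.card • 2 := by simp
    _ ≤ _ := Finset.card_nsmul_le_sum _ _ _ hW1b
  have b2 : (H.W2 \ H.W1).card * 1 ≤ ∑ u ∈ H.W2 \ H.W1, Mcount H u := by
    calc (H.W2 \ H.W1).card * 1 = (H.W2 \ H.W1).card • 1 := by simp
    _ ≤ _ := Finset.card_nsmul_le_sum _ _ _ hW2W1b
  have b3 : (V' \ H.W2).card * 2 ≤ ∑ u ∈ V' \ H.W2, Mcount H u := by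
    calc (V' \ H.W2).card * 2 = (V' \ H.W2).card • 2 := by simp
    _ ≤ _ := Finset.card_nsmul_le_sum _ _ _ hVW2b
  have hVne : 1 ≤ (V' \ H.W2).card := by
    rw [Nat.one_le_iff_ne_zero, Ne, Finset.card_eq_zero]
    intro h
    exact hne (Finset.Subset.antisymm (W2_subset H)
      (fun v hv => by_contra fun hv2 => (Finset.eq_empty_iff_forall_notMem.mp h) v
        (Finset.mem_sdiff.mpr ⟨hv, hv2⟩)))
  omega

lemma escape_zero {R : Type*} [CommRing R] (lam : R) (x : V × V → R)
    (c : V → Option (Bool × Bool)) (hc : ∀ v, (c v).isSome = true ↔ v ∈ V')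
    {v0 : V} {e0 : V × V} (hv0 : v0 ∈ H.W2) (he0 : e0 ∈ H.h v0)
    (hrel : relEnd v0 e0 ∉ V') {V2 : Finset V} {gs : V → Finset (V × V)}
    (hV2 : V2 ⊆ H.W2 \ H.W1) (hgs : gs ∈ H.choices (H.W1 ∪ V2)) :
    H.Bterm lam x c V2 gs = 0 := by
  have hznone : c (relEnd v0 e0) = none := by
    rcases h : c (relEnd v0 e0) with _ | a
    · rfl
    · exact absurd ((hc _).mp (by simp [h])) hrel
  have hz : ∀ bar, G.zfun x c bar v0 e0 = 0 := by
    intro bar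
    rw [zfun_eq, sInt_eq, hznone]
    simp [sA]
  rw [mem_choices] at hgs
  unfold HData.Bterm
  by_cases h1 : v0 ∈ H.W1 ∪ V2 ∧ e0 ∈ gs v0
  · have hp : (∏ v ∈ H.W1 ∪ V2, ∏ e ∈ gs v, G.zfun x c true v e) = 0 :=
      Finset.prod_eq_zero h1.1 (Finset.prod_eq_zero h1.2 (hz true))
    rw [hp]; ring
  · have h2 : v0 ∈ H.W1 ∪ (H.W2 \ (H.W1 ∪ V2)) ∧ e0 ∈ H.h v0 \ gs v0 := by
      by_cases hw1 : v0 ∈ H.W1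
      · have hmem : v0 ∈ H.W1 ∪ V2 := Finset.mem_union_left _ hw1
        have hng : e0 ∉ gs v0 := fun hg => h1 ⟨hmem, hg⟩
        exact ⟨Finset.mem_union_left _ hw1, Finset.mem_sdiff.mpr ⟨he0, hng⟩⟩
      · by_cases hv2 : v0 ∈ V2
        · exfalso
          have hmem : v0 ∈ H.W1 ∪ V2 := Finset.mem_union_right _ hv2
          have : gs v0 = H.h v0 := Finset.eq_of_subset_of_card_le (hgs v0).1
            (by rw [(hgs v0).2.1 hmem, card_h_single H hv0 hw1])
          exact h1 ⟨hmem, this ▸ he0⟩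
        · have hnm : v0 ∉ H.W1 ∪ V2 := by simp [hw1, hv2]
          have : gs v0 = ∅ := (hgs v0).2.2 hnm
          exact ⟨Finset.mem_union_right _ (Finset.mem_sdiff.mpr ⟨hv0, hnm⟩),
            Finset.mem_sdiff.mpr ⟨he0, by simp [this]⟩⟩
    have hp : (∏ v ∈ H.W1 ∪ (H.W2 \ (H.W1 ∪ V2)), ∏ e ∈ H.h v \ gs v,
        G.zfun x c false v e) = 0 :=
      Finset.prod_eq_zero h2.1 (Finset.prod_eq_zero h2.2 (hz false))
    rw [hp]; ring

lemma eps_sum_update {u : V} (hu : u ∈ V') (c : V → Option (Bool × Bool)) (s : Bool × Bool) :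
    (∑ v ∈ V', ((Function.update c u (some s) v).elim 0 fun p => if p.2 then 1 else 0 : ℕ)) =
      (if s.2 then 1 else 0) +
        ∑ v ∈ V'.erase u, ((c v).elim 0 fun p => if p.2 then 1 else 0 : ℕ) := by
  rw [← Finset.add_sum_erase _ _ hu, Function.update_self]
  exact congrArg _ (Finset.sum_congr rfl fun v hv => by
    rw [Function.update_of_ne (Finset.ne_of_mem_erase hv)])

lemma caseA {R : Type*} [CommRing R] (lam : R) (x : V × V → R)
    (c : V → Option (Bool × Bool)) {u : V} (hu : u ∈ V') (huW2 : u ∉ H.W2)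
    (hM : Mcount H u = 0 ∨ Odd (Mcount H u)) {V2 : Finset V} {gs : V → Finset (V × V)}
    (hV2 : V2 ⊆ H.W2 \ H.W1) (hgs : gs ∈ H.choices (H.W1 ∪ V2)) :
    ∑ s : Bool × Bool, H.Bterm lam x (Function.update c u (some s)) V2 gs = 0 := by
  have hu1 : u ∉ H.W1 ∪ V2 := by
    intro h
    rcases Finset.mem_union.mp h with h | h
    · exact huW2 (W1_subset H h)
    · exact huW2 (Finset.mem_sdiff.mp (hV2 h)).1
  have hu2 : u ∉ H.W1 ∪ (H.W2 \ (H.W1 ∪ V2)) := by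
    intro h
    rcases Finset.mem_union.mp h with h | h
    · exact huW2 (W1_subset H h)
    · exact huW2 (Finset.mem_sdiff.mp h).1
  have hm := count_split H hV2 hgs u
  calc ∑ s : Bool × Bool, H.Bterm lam x (Function.update c u (some s)) V2 gs
      = ∑ s : Bool × Bool, ((-1 : R) ^ (if s.2 then 1 else 0) *
          ((sA (some s) : ℤ) : R) ^ (Mcount H u)) *
          ((-1 : R) ^ (∑ v ∈ V'.erase u, ((c v).elim 0 fun p => if p.2 then 1 else 0 : ℕ)) *
            (-1 : R) ^ (H.W1 ∪ V2).card *
            (lam + 1) ^ (V' \ (H.W1 ∪ V2)).card *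
            (∏ v ∈ H.W1 ∪ V2, ∏ e ∈ gs v, zsel G x c u true v e) *
            ∏ v ∈ H.W1 ∪ (H.W2 \ (H.W1 ∪ V2)), ∏ e ∈ H.h v \ gs v,
              zsel G x c u false v e) := by
        refine Finset.sum_congr rfl fun s _ => ?_
        unfold HData.Bterm
        rw [eps_sum_update hu c s, pow_add,
          prod_zfun_update G x c true u (some s) _ _ hu1,
          prod_zfun_update G x c false u (some s) _ _ hu2, ← hm, pow_add]
        ring
    _ = 0 := by rw [← Finset.sum_mul, sigma_zero _ hM, zero_mul]

lemma caseB {R : Type*} [CommRing R] (lam : R) (x : V × V → R)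
    (c : V → Option (Bool × Bool)) {u : V} (huW2 : u ∈ H.W2) (huW1 : u ∉ H.W1)
    (hM : Mcount H u = 0) {V2 : Finset V} {gs : V → Finset (V × V)}
    (hV2 : V2 ⊆ H.W2 \ H.W1) (huV2 : u ∉ V2) (hgs : gs ∈ H.choices (H.W1 ∪ V2)) :
    ∑ s : Bool × Bool, (H.Bterm lam x (Function.update c u (some s)) V2 gs +
      H.Bterm lam x (Function.update c u (some s)) (insert u V2)
        (Function.update gs u (H.h u))) = 0 := by
  obtain ⟨e0, he0⟩ := Finset.card_eq_one.mp (card_h_single H huW2 huW1)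
  have hu1 : u ∉ H.W1 ∪ V2 := by simp [huW1, huV2]
  have huV' : u ∈ V' := W2_subset H huW2
  have hu2 : u ∈ H.W1 ∪ (H.W2 \ (H.W1 ∪ V2)) :=
    Finset.mem_union_right _ (Finset.mem_sdiff.mpr ⟨huW2, hu1⟩)
  have hgsu : gs u = ∅ := ((mem_choices H).mp hgs u).2.2 hu1
  have hm := count_split H hV2 hgs u
  rw [hM] at hm
  have hm1 : (∑ v ∈ H.W1 ∪ V2, ∑ e ∈ gs v, if relEnd v e = u then 1 else 0) = 0 := by omega
  have hm2 : (∑ v ∈ H.W1 ∪ (H.W2 \ (H.W1 ∪ V2)), ∑ e ∈ H.h v \ gs v,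
      if relEnd v e = u then 1 else 0) = 0 := by omega
  have hrelu : relEnd u e0 ≠ u := by
    have h := Finset.sum_eq_zero_iff.mp hm2 u hu2
    rw [hgsu, Finset.sdiff_empty, he0, Finset.sum_singleton] at h
    intro hr
    rw [if_pos hr] at h
    omega
  have hm2' : (∑ v ∈ (H.W1 ∪ (H.W2 \ (H.W1 ∪ V2))).erase u, ∑ e ∈ H.h v \ gs v,
      if relEnd v e = u then 1 else 0) = 0 :=
    Finset.sum_eq_zero fun v hv =>
      Finset.sum_eq_zero_iff.mp hm2 v (Finset.mem_of_mem_erase hv)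
  have hI2 : H.W1 ∪ (H.W2 \ (H.W1 ∪ insert u V2)) =
      (H.W1 ∪ (H.W2 \ (H.W1 ∪ V2))).erase u := by
    ext v
    by_cases hvu : v = u
    · subst hvu; simp [huW1]
    · simp [Finset.mem_erase, Finset.mem_union, Finset.mem_sdiff, Finset.mem_insert, hvu]
  have hI3 : V' \ (H.W1 ∪ insert u V2) = (V' \ (H.W1 ∪ V2)).erase u := by
    ext v
    by_cases hvu : v = u
    · subst hvu; simp
    · simp [Finset.mem_erase, Finset.mem_sdiff, Finset.mem_union, Finset.mem_insert, hvu]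
  have hI1 : H.W1 ∪ insert u V2 = insert u (H.W1 ∪ V2) := Finset.union_insert u H.W1 V2
  have huMem : u ∈ V' \ (H.W1 ∪ V2) := Finset.mem_sdiff.mpr ⟨huV', hu1⟩
  have hcard2 : (V' \ (H.W1 ∪ V2)).card = ((V' \ (H.W1 ∪ V2)).erase u).card + 1 :=
    (Finset.card_erase_add_one huMem).symm
  have hB1 : ∀ s : Bool × Bool, H.Bterm lam x (Function.update c u (some s)) V2 gs =
      (-1 : R) ^ (if s.2 then 1 else 0) *
        ((-1 : R) ^ (∑ v ∈ V'.erase u, ((c v).elim 0 fun p => if p.2 then 1 else 0 : ℕ)) *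
          (-1 : R) ^ (H.W1 ∪ V2).card *
          ((lam + 1) ^ ((V' \ (H.W1 ∪ V2)).erase u).card * (lam + 1)) *
          (∏ v ∈ H.W1 ∪ V2, ∏ e ∈ gs v, zsel G x c u true v e) *
          (((sInt c (relEnd u e0) : ℤ) : R) * zb G x u e0 false s.1 *
            ∏ v ∈ (H.W1 ∪ (H.W2 \ (H.W1 ∪ V2))).erase u, ∏ e ∈ H.h v \ gs v,
              zsel G x c u false v e)) := by
    intro s
    unfold HData.Bterm
    rw [eps_sum_update huV' c s, pow_add,
      prod_zfun_update G x c true u (some s) _ _ hu1, hm1, pow_zero, one_mul,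
      ← Finset.mul_prod_erase _ _ hu2, hgsu, Finset.sdiff_empty, he0, Finset.prod_singleton,
      zfun_update_self_eq G x c false u e0 s, if_neg hrelu, if_neg hrelu, pow_zero, one_mul,
      prod_zfun_update G x c false u (some s) _ _ (Finset.notMem_erase u _), hm2',
      pow_zero, one_mul, hcard2, pow_succ]
    ring
  have hB2 : ∀ s : Bool × Bool, H.Bterm lam x (Function.update c u (some s)) (insert u V2)
      (Function.update gs u (H.h u)) =
      (-1 : R) ^ (if s.2 then 1 else 0) *
        ((-1 : R) ^ (∑ v ∈ V'.erase u, ((c v).elim 0 fun p => if p.2 then 1 else 0 : ℕ)) *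
          ((-1 : R) ^ (H.W1 ∪ V2).card * (-1)) *
          (lam + 1) ^ ((V' \ (H.W1 ∪ V2)).erase u).card *
          (∏ v ∈ H.W1 ∪ V2, ∏ e ∈ gs v, zsel G x c u true v e) *
          (((sInt c (relEnd u e0) : ℤ) : R) * zb G x u e0 true s.1 *
            ∏ v ∈ (H.W1 ∪ (H.W2 \ (H.W1 ∪ V2))).erase u, ∏ e ∈ H.h v \ gs v,
              zsel G x c u false v e)) := by
    intro s
    unfold HData.Bterm
    have hrest1 : (∏ v ∈ H.W1 ∪ V2, ∏ e ∈ Function.update gs u (H.h u) v,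
        G.zfun x (Function.update c u (some s)) true v e) =
        ∏ v ∈ H.W1 ∪ V2, ∏ e ∈ gs v, G.zfun x (Function.update c u (some s)) true v e :=
      Finset.prod_congr rfl fun v hv => by
        rw [Function.update_of_ne (ne_of_mem_of_not_mem hv hu1)]
    have hrest2 : (∏ v ∈ (H.W1 ∪ (H.W2 \ (H.W1 ∪ V2))).erase u,
        ∏ e ∈ H.h v \ Function.update gs u (H.h u) v,
          G.zfun x (Function.update c u (some s)) false v e) =
        ∏ v ∈ (H.W1 ∪ (H.W2 \ (H.W1 ∪ V2))).erase u, ∏ e ∈ H.h v \ gs v,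
          G.zfun x (Function.update c u (some s)) false v e :=
      Finset.prod_congr rfl fun v hv => by
        rw [Function.update_of_ne (Finset.ne_of_mem_erase hv)]
    rw [eps_sum_update huV' c s, pow_add, hI2, hI3, hI1,
      Finset.card_insert_of_notMem hu1, pow_succ,
      Finset.prod_insert hu1, hrest1, hrest2, Function.update_self, he0,
      Finset.prod_singleton,
      zfun_update_self_eq G x c true u e0 s, if_neg hrelu, if_neg hrelu, pow_zero, one_mul,
      prod_zfun_update G x c true u (some s) _ _ hu1, hm1, pow_zero, one_mul,
      prod_zfun_update G x c false u (some s) _ _ (Finset.notMem_erase u _), hm2',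
      pow_zero, one_mul]
    ring
  calc ∑ s : Bool × Bool, (H.Bterm lam x (Function.update c u (some s)) V2 gs +
      H.Bterm lam x (Function.update c u (some s)) (insert u V2)
        (Function.update gs u (H.h u)))
      = ∑ s : Bool × Bool, (-1 : R) ^ (if s.2 then 1 else 0) *
        ((-1 : R) ^ (∑ v ∈ V'.erase u, ((c v).elim 0 fun p => if p.2 then 1 else 0 : ℕ)) *
          (-1 : R) ^ (H.W1 ∪ V2).card *
          (lam + 1) ^ ((V' \ (H.W1 ∪ V2)).erase u).card *
          (∏ v ∈ H.W1 ∪ V2, ∏ e ∈ gs v, zsel G x c u true v e) *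
          (((sInt c (relEnd u e0) : ℤ) : R) *
            ((lam + 1) * zb G x u e0 false s.1 - zb G x u e0 true s.1) *
            ∏ v ∈ (H.W1 ∪ (H.W2 \ (H.W1 ∪ V2))).erase u, ∏ e ∈ H.h v \ gs v,
              zsel G x c u false v e)) := by
        refine Finset.sum_congr rfl fun s _ => ?_
        rw [hB1 s, hB2 s]
        ring
    _ = 0 := sum_eps_zero (fun d =>
        (-1 : R) ^ (∑ v ∈ V'.erase u, ((c v).elim 0 fun p => if p.2 then 1 else 0 : ℕ)) *
          (-1 : R) ^ (H.W1 ∪ V2).card *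
          (lam + 1) ^ ((V' \ (H.W1 ∪ V2)).erase u).card *
          (∏ v ∈ H.W1 ∪ V2, ∏ e ∈ gs v, zsel G x c u true v e) *
          (((sInt c (relEnd u e0) : ℤ) : R) *
            ((lam + 1) * zb G x u e0 false d - zb G x u e0 true d) *
            ∏ v ∈ (H.W1 ∪ (H.W2 \ (H.W1 ∪ V2))).erase u, ∏ e ∈ H.h v \ gs v,
              zsel G x c u false v e))

lemma caseC {R : Type*} [CommRing R] (lam : R) (x : V × V → R)
    (c : V → Option (Bool × Bool)) {u : V} (huW1 : u ∈ H.W1)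
    (hM : Mcount H u = 0 ∨ Odd (Mcount H u)) {V2 : Finset V} {gs : V → Finset (V × V)}
    (hV2 : V2 ⊆ H.W2 \ H.W1) (hgs : gs ∈ H.choices (H.W1 ∪ V2))
    {e1 e2 : V × V} (hh : H.h u = {e1, e2}) (hne12 : e1 ≠ e2) (hgsu : gs u = {e1}) :
    ∑ s : Bool × Bool, (H.Bterm lam x (Function.update c u (some s)) V2 gs +
      H.Bterm lam x (Function.update c u (some s)) V2 (Function.update gs u {e2})) = 0 := by
  have hu1 : u ∈ H.W1 ∪ V2 := Finset.mem_union_left _ huW1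
  have hu2 : u ∈ H.W1 ∪ (H.W2 \ (H.W1 ∪ V2)) := Finset.mem_union_left _ huW1
  have huV' : u ∈ V' := W2_subset H (W1_subset H huW1)
  have hd1 : H.h u \ gs u = {e2} := by
    rw [hh, hgsu]
    ext a
    simp only [Finset.mem_sdiff, Finset.mem_insert, Finset.mem_singleton]
    constructor
    · rintro ⟨h | h, h2⟩
      · exact absurd h h2
      · exact h
    · rintro rfl
      exact ⟨Or.inr rfl, fun h => hne12 h.symm⟩
  have hd2 : H.h u \ Function.update gs u {e2} u = {e1} := by
    rw [Function.update_self, hh]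
    ext a
    simp only [Finset.mem_sdiff, Finset.mem_insert, Finset.mem_singleton]
    constructor
    · rintro ⟨h | h, h2⟩
      · exact h
      · exact absurd h h2
    · rintro rfl
      exact ⟨Or.inl rfl, fun h => hne12 h⟩
  have hm := count_split H hV2 hgs u
  have ha : (∑ v ∈ H.W1 ∪ V2, ∑ e ∈ gs v, if relEnd v e = u then 1 else 0) =
      (if relEnd u e1 = u then 1 else 0) +
        ∑ v ∈ (H.W1 ∪ V2).erase u, ∑ e ∈ gs v, if relEnd v e = u then 1 else 0 := by
    rw [← Finset.add_sum_erase _ _ hu1, hgsu, Finset.sum_singleton]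
  have hb : (∑ v ∈ H.W1 ∪ (H.W2 \ (H.W1 ∪ V2)), ∑ e ∈ H.h v \ gs v,
      if relEnd v e = u then 1 else 0) =
      (if relEnd u e2 = u then 1 else 0) +
        ∑ v ∈ (H.W1 ∪ (H.W2 \ (H.W1 ∪ V2))).erase u, ∑ e ∈ H.h v \ gs v,
          if relEnd v e = u then 1 else 0 := by
    rw [← Finset.add_sum_erase _ _ hu2, hd1, Finset.sum_singleton]
  have hK : ((if relEnd u e1 = u then 1 else 0) + (if relEnd u e2 = u then 1 else 0) +
      (∑ v ∈ (H.W1 ∪ V2).erase u, ∑ e ∈ gs v, if relEnd v e = u then 1 else 0) +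
      ∑ v ∈ (H.W1 ∪ (H.W2 \ (H.W1 ∪ V2))).erase u, ∑ e ∈ H.h v \ gs v,
        if relEnd v e = u then 1 else 0) = Mcount H u := by omega
  have hK' : ((if relEnd u e1 = u then 1 else 0) + (if relEnd u e2 = u then 1 else 0) +
      (∑ v ∈ (H.W1 ∪ V2).erase u, ∑ e ∈ gs v, if relEnd v e = u then 1 else 0) +
      ∑ v ∈ (H.W1 ∪ (H.W2 \ (H.W1 ∪ V2))).erase u, ∑ e ∈ H.h v \ gs v,
        if relEnd v e = u then 1 else 0) = 0 ∨
      Odd ((if relEnd u e1 = u then 1 else 0) + (if relEnd u e2 = u then 1 else 0) +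
      (∑ v ∈ (H.W1 ∪ V2).erase u, ∑ e ∈ gs v, if relEnd v e = u then 1 else 0) +
      ∑ v ∈ (H.W1 ∪ (H.W2 \ (H.W1 ∪ V2))).erase u, ∑ e ∈ H.h v \ gs v,
        if relEnd v e = u then 1 else 0) := by rw [hK]; exact hM
  have hB1 : ∀ s : Bool × Bool, H.Bterm lam x (Function.update c u (some s)) V2 gs =
      (-1 : R) ^ (if s.2 then 1 else 0) *
        ((-1 : R) ^ (∑ v ∈ V'.erase u, ((c v).elim 0 fun p => if p.2 then 1 else 0 : ℕ)) *
          (-1 : R) ^ (H.W1 ∪ V2).card * (lam + 1) ^ (V' \ (H.W1 ∪ V2)).card *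
          (((sA (some s) : ℤ) : R) ^ (if relEnd u e1 = u then 1 else 0) *
            ((if relEnd u e1 = u then 1 else ((sInt c (relEnd u e1) : ℤ) : R)) *
              zb G x u e1 true s.1)) *
          (((sA (some s) : ℤ) : R) ^
              (∑ v ∈ (H.W1 ∪ V2).erase u, ∑ e ∈ gs v, if relEnd v e = u then 1 else 0) *
            ∏ v ∈ (H.W1 ∪ V2).erase u, ∏ e ∈ gs v, zsel G x c u true v e) *
          (((sA (some s) : ℤ) : R) ^ (if relEnd u e2 = u then 1 else 0) *
            ((if relEnd u e2 = u then 1 else ((sInt c (relEnd u e2) : ℤ) : R)) *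
              zb G x u e2 false s.1)) *
          (((sA (some s) : ℤ) : R) ^
              (∑ v ∈ (H.W1 ∪ (H.W2 \ (H.W1 ∪ V2))).erase u, ∑ e ∈ H.h v \ gs v,
                if relEnd v e = u then 1 else 0) *
            ∏ v ∈ (H.W1 ∪ (H.W2 \ (H.W1 ∪ V2))).erase u, ∏ e ∈ H.h v \ gs v,
              zsel G x c u false v e)) := by
    intro s
    unfold HData.Bterm
    rw [eps_sum_update huV' c s, pow_add,
      ← Finset.mul_prod_erase _ _ hu1,
      ← Finset.mul_prod_erase _ _ hu2,
      hd1, hgsu, Finset.prod_singleton, Finset.prod_singleton,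
      zfun_update_self_eq G x c true u e1 s, zfun_update_self_eq G x c false u e2 s,
      prod_zfun_update G x c true u (some s) _ _ (Finset.notMem_erase u _),
      prod_zfun_update G x c false u (some s) _ _ (Finset.notMem_erase u _)]
    ring
  have hB2 : ∀ s : Bool × Bool, H.Bterm lam x (Function.update c u (some s)) V2
      (Function.update gs u {e2}) =
      (-1 : R) ^ (if s.2 then 1 else 0) *
        ((-1 : R) ^ (∑ v ∈ V'.erase u, ((c v).elim 0 fun p => if p.2 then 1 else 0 : ℕ)) *
          (-1 : R) ^ (H.W1 ∪ V2).card * (lam + 1) ^ (V' \ (H.W1 ∪ V2)).card *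
          (((sA (some s) : ℤ) : R) ^ (if relEnd u e2 = u then 1 else 0) *
            ((if relEnd u e2 = u then 1 else ((sInt c (relEnd u e2) : ℤ) : R)) *
              zb G x u e2 true s.1)) *
          (((sA (some s) : ℤ) : R) ^
              (∑ v ∈ (H.W1 ∪ V2).erase u, ∑ e ∈ gs v, if relEnd v e = u then 1 else 0) *
            ∏ v ∈ (H.W1 ∪ V2).erase u, ∏ e ∈ gs v, zsel G x c u true v e) *
          (((sA (some s) : ℤ) : R) ^ (if relEnd u e1 = u then 1 else 0) *
            ((if relEnd u e1 = u then 1 else ((sInt c (relEnd u e1) : ℤ) : R)) *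
              zb G x u e1 false s.1)) *
          (((sA (some s) : ℤ) : R) ^
              (∑ v ∈ (H.W1 ∪ (H.W2 \ (H.W1 ∪ V2))).erase u, ∑ e ∈ H.h v \ gs v,
                if relEnd v e = u then 1 else 0) *
            ∏ v ∈ (H.W1 ∪ (H.W2 \ (H.W1 ∪ V2))).erase u, ∏ e ∈ H.h v \ gs v,
              zsel G x c u false v e)) := by
    intro s
    unfold HData.Bterm
    have hrest1 : (∏ v ∈ (H.W1 ∪ V2).erase u, ∏ e ∈ Function.update gs u {e2} v,
        G.zfun x (Function.update c u (some s)) true v e) =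
        ∏ v ∈ (H.W1 ∪ V2).erase u, ∏ e ∈ gs v,
          G.zfun x (Function.update c u (some s)) true v e :=
      Finset.prod_congr rfl fun v hv => by
        rw [Function.update_of_ne (Finset.ne_of_mem_erase hv)]
    have hrest2 : (∏ v ∈ (H.W1 ∪ (H.W2 \ (H.W1 ∪ V2))).erase u,
        ∏ e ∈ H.h v \ Function.update gs u {e2} v,
          G.zfun x (Function.update c u (some s)) false v e) =
        ∏ v ∈ (H.W1 ∪ (H.W2 \ (H.W1 ∪ V2))).erase u, ∏ e ∈ H.h v \ gs v,
          G.zfun x (Function.update c u (some s)) false v e :=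
      Finset.prod_congr rfl fun v hv => by
        rw [Function.update_of_ne (Finset.ne_of_mem_erase hv)]
    rw [eps_sum_update huV' c s, pow_add,
      ← Finset.mul_prod_erase _ _ hu1,
      ← Finset.mul_prod_erase _ _ hu2,
      hd2, Function.update_self, hrest1, hrest2,
      Finset.prod_singleton, Finset.prod_singleton,
      zfun_update_self_eq G x c true u e2 s, zfun_update_self_eq G x c false u e1 s,
      prod_zfun_update G x c true u (some s) _ _ (Finset.notMem_erase u _),
      prod_zfun_update G x c false u (some s) _ _ (Finset.notMem_erase u _)]
    ring
  calc ∑ s : Bool × Bool, (H.Bterm lam x (Function.update c u (some s)) V2 gs +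
      H.Bterm lam x (Function.update c u (some s)) V2 (Function.update gs u {e2}))
      = ∑ s : Bool × Bool, ((-1 : R) ^ (if s.2 then 1 else 0) *
          ((sA (some s) : ℤ) : R) ^
            ((if relEnd u e1 = u then 1 else 0) + (if relEnd u e2 = u then 1 else 0) +
              (∑ v ∈ (H.W1 ∪ V2).erase u, ∑ e ∈ gs v, if relEnd v e = u then 1 else 0) +
              ∑ v ∈ (H.W1 ∪ (H.W2 \ (H.W1 ∪ V2))).erase u, ∑ e ∈ H.h v \ gs v,
                if relEnd v e = u then 1 else 0)) *
        ((-1 : R) ^ (∑ v ∈ V'.erase u, ((c v).elim 0 fun p => if p.2 then 1 else 0 : ℕ)) *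
          (-1 : R) ^ (H.W1 ∪ V2).card * (lam + 1) ^ (V' \ (H.W1 ∪ V2)).card *
          (if relEnd u e1 = u then 1 else ((sInt c (relEnd u e1) : ℤ) : R)) *
          (if relEnd u e2 = u then 1 else ((sInt c (relEnd u e2) : ℤ) : R)) *
          (∏ v ∈ (H.W1 ∪ V2).erase u, ∏ e ∈ gs v, zsel G x c u true v e) *
          (∏ v ∈ (H.W1 ∪ (H.W2 \ (H.W1 ∪ V2))).erase u, ∏ e ∈ H.h v \ gs v,
            zsel G x c u false v e) *
          (zb G x u e1 true true * zb G x u e2 false true +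
            zb G x u e2 true true * zb G x u e1 false true)) := by
        refine Finset.sum_congr rfl fun s _ => ?_
        rw [hB1 s, hB2 s, ← zb_pair_const G x u e1 e2 s.1]
        ring
    _ = 0 := by rw [← Finset.sum_mul, sigma_zero _ hK', zero_mul]

lemma choices_mem_update {S : Finset V} {gs : V → Finset (V × V)} {u : V}
    (hgs : gs ∈ H.choices S) {T : Finset V} (hT : ∀ v, v ≠ u → (v ∈ T ↔ v ∈ S))
    {E : Finset (V × V)} (hE : E ⊆ H.h u) (h1 : u ∈ T → E.card = 1) (h2 : u ∉ T → E = ∅) :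
    Function.update gs u E ∈ H.choices T := by
  rw [mem_choices] at hgs ⊢
  intro v
  by_cases hv : v = u
  · subst hv
    rw [Function.update_self]
    exact ⟨hE, h1, h2⟩
  · rw [Function.update_of_ne hv]
    exact ⟨(hgs v).1, fun h => (hgs v).2.1 ((hT v hv).mp h),
      fun h => (hgs v).2.2 (fun h' => h ((hT v hv).mpr h'))⟩

lemma sum_choices_insert {M : Type*} [AddCommMonoid M] {u : V} (huW2 : u ∈ H.W2)
    (huW1 : u ∉ H.W1) {V2 : Finset V} (huV2 : u ∉ V2)
    (f : (V → Finset (V × V)) → M) :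
    ∑ gs ∈ H.choices (H.W1 ∪ insert u V2), f gs =
      ∑ gs ∈ H.choices (H.W1 ∪ V2), f (Function.update gs u (H.h u)) := by
  have hu1 : u ∉ H.W1 ∪ V2 := by simp [huW1, huV2]
  have hu2 : u ∈ H.W1 ∪ insert u V2 :=
    Finset.mem_union_right _ (Finset.mem_insert_self u V2)
  have hT1 : ∀ v, v ≠ u → (v ∈ H.W1 ∪ V2 ↔ v ∈ H.W1 ∪ insert u V2) := by
    intro v hv
    simp [Finset.mem_union, Finset.mem_insert, hv]
  have hT2 : ∀ v, v ≠ u → (v ∈ H.W1 ∪ insert u V2 ↔ v ∈ H.W1 ∪ V2) :=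
    fun v hv => (hT1 v hv).symm
  have hval : ∀ gs ∈ H.choices (H.W1 ∪ insert u V2), gs u = H.h u := by
    intro gs hgs
    rw [mem_choices] at hgs
    exact Finset.eq_of_subset_of_card_le (hgs u).1
      (by rw [(hgs u).2.1 hu2, card_h_single H huW2 huW1])
  refine Finset.sum_nbij' (fun gs => Function.update gs u ∅)
    (fun gs => Function.update gs u (H.h u)) ?_ ?_ ?_ ?_ ?_
  · intro gs hgs
    exact choices_mem_update H hgs hT1 (Finset.empty_subset _)
      (fun h => absurd h hu1) (fun _ => rfl)
  · intro gs hgs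
    exact choices_mem_update H hgs hT2 (Finset.Subset.refl _)
      (fun _ => card_h_single H huW2 huW1) (fun h => absurd hu2 h)
  · intro gs hgs
    show Function.update (Function.update gs u ∅) u (H.h u) = gs
    rw [Function.update_idem, ← hval gs hgs]
    exact Function.update_eq_self u gs
  · intro gs hgs
    show Function.update (Function.update gs u (H.h u)) u ∅ = gs
    rw [Function.update_idem, ← ((mem_choices H).mp hgs u).2.2 hu1]
    exact Function.update_eq_self u gs
  · intro gs hgs
    show f gs = f (Function.update (Function.update gs u ∅) u (H.h u))
    rw [Function.update_idem, ← hval gs hgs, Function.update_eq_self u gs]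

lemma sum_choices_pair {M : Type*} [AddCommMonoid M] {u : V} (huW1 : u ∈ H.W1)
    {V2 : Finset V} {e1 e2 : V × V} (hh : H.h u = {e1, e2}) (hne12 : e1 ≠ e2)
    (f : (V → Finset (V × V)) → M) :
    ∑ gs ∈ H.choices (H.W1 ∪ V2), f gs =
      ∑ gs ∈ (H.choices (H.W1 ∪ V2)).filter (fun gs => gs u = {e1}),
        (f gs + f (Function.update gs u {e2})) := by
  have hu1 : u ∈ H.W1 ∪ V2 := Finset.mem_union_left _ huW1
  have he1 : e1 ∈ H.h u := by rw [hh]; exact Finset.mem_insert_self _ _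
  have he2 : e2 ∈ H.h u := by rw [hh]; simp
  have hTid : ∀ v, v ≠ u → (v ∈ H.W1 ∪ V2 ↔ v ∈ H.W1 ∪ V2) := fun v _ => Iff.rfl
  have hval : ∀ gs ∈ H.choices (H.W1 ∪ V2), gs u ≠ {e1} → gs u = {e2} := by
    intro gs hgs hP
    rw [mem_choices] at hgs
    obtain ⟨a, ha⟩ := Finset.card_eq_one.mp ((hgs u).2.1 hu1)
    have hah : a ∈ H.h u := (hgs u).1 (ha ▸ Finset.mem_singleton_self a)
    rw [hh, Finset.mem_insert, Finset.mem_singleton] at hah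
    rcases hah with rfl | rfl
    · exact absurd ha hP
    · exact ha
  rw [Finset.sum_add_distrib,
    ← Finset.sum_filter_add_sum_filter_not (H.choices (H.W1 ∪ V2))
      (fun gs => gs u = {e1}) f]
  congr 1
  refine Finset.sum_nbij' (fun gs => Function.update gs u {e1})
    (fun gs => Function.update gs u {e2}) ?_ ?_ ?_ ?_ ?_
  · intro gs hgs
    have hgs' := (Finset.mem_filter.mp hgs).1
    refine Finset.mem_filter.mpr ⟨choices_mem_update H hgs' hTid
      (Finset.singleton_subset_iff.mpr he1) (fun _ => Finset.card_singleton e1)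
      (fun h => absurd hu1 h), Function.update_self u {e1} gs⟩
  · intro gs hgs
    have hgs' := (Finset.mem_filter.mp hgs).1
    refine Finset.mem_filter.mpr ⟨choices_mem_update H hgs' hTid
      (Finset.singleton_subset_iff.mpr he2) (fun _ => Finset.card_singleton e2)
      (fun h => absurd hu1 h), ?_⟩
    show ¬Function.update gs u {e2} u = {e1}
    rw [Function.update_self]
    intro h
    exact hne12 (Finset.singleton_injective h).symm
  · intro gs hgs
    have h := hval gs (Finset.mem_filter.mp hgs).1 (by
      simpa using (Finset.mem_filter.mp hgs).2)
    show Function.update (Function.update gs u {e1}) u {e2} = gs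
    rw [Function.update_idem, ← h]
    exact Function.update_eq_self u gs
  · intro gs hgs
    show Function.update (Function.update gs u {e2}) u {e1} = gs
    rw [Function.update_idem, ← (Finset.mem_filter.mp hgs).2]
    exact Function.update_eq_self u gs
  · intro gs hgs
    have h := hval gs (Finset.mem_filter.mp hgs).1 (by
      simpa using (Finset.mem_filter.mp hgs).2)
    show f gs = f (Function.update (Function.update gs u {e1}) u {e2})
    rw [Function.update_idem, ← h, Function.update_eq_self u gs]

open Classical in
lemma Aval_eq_zero_of_bad {R : Type*} [CommRing R] (lam : R) (x : V × V → R)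
    (hb : (∃ v ∈ H.W2, ∃ e ∈ H.h v, relEnd v e ∉ V') ∨
      (∃ u, (u ∈ V' ∧ u ∉ H.W2 ∧ (Mcount H u = 0 ∨ Odd (Mcount H u))) ∨
            (u ∈ H.W2 ∧ u ∉ H.W1 ∧ Mcount H u = 0) ∨
            (u ∈ H.W1 ∧ (Mcount H u = 0 ∨ Odd (Mcount H u))))) :
    H.Aval lam x = 0 := by
  rcases hb with ⟨v0, hv0, e0, he0, hrel⟩ | ⟨u, hbad⟩
  · unfold HData.Aval
    refine Finset.sum_eq_zero fun c _ => ?_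
    split_ifs with hc
    · exact Finset.sum_eq_zero fun V2 hV2 => Finset.sum_eq_zero fun gs hgs =>
        escape_zero H lam x c hc hv0 he0 hrel (Finset.mem_powerset.mp hV2) hgs
    · rfl
  · have huV' : u ∈ V' := by
      rcases hbad with ⟨h, _, _⟩ | ⟨h, _, _⟩ | ⟨h, _⟩
      · exact h
      · exact W2_subset H h
      · exact W2_subset H (W1_subset H h)
    have key : ∀ c0 : V → Option (Bool × Bool),
        (∑ a : Option (Bool × Bool),
          if (∀ v, ((Function.update c0 u a) v).isSome = true ↔ v ∈ V') then
            ∑ V2 ∈ (H.W2 \ H.W1).powerset, ∑ gs ∈ H.choices (H.W1 ∪ V2),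
              H.Bterm lam x (Function.update c0 u a) V2 gs
          else 0) = 0 := by
      intro c0
      by_cases hsupp : ∀ v, v ≠ u → ((c0 v).isSome = true ↔ v ∈ V')
      · have hPiff : ∀ a : Option (Bool × Bool),
            (∀ v, ((Function.update c0 u a) v).isSome = true ↔ v ∈ V') ↔
              a.isSome = true := by
          intro a
          constructor
          · intro hP
            have h := hP u
            rwa [Function.update_self, iff_true_intro huV', iff_true] at h
          · intro ha v
            by_cases hv : v = u
            · subst hv
              rw [Function.update_self]
              exact iff_of_true ha huV'
            · rw [Function.update_of_ne hv]
              exact hsupp v hv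
        rw [Fintype.sum_option,
          if_neg (fun hP => by simpa using (hPiff none).mp hP), zero_add]
        have hsome : ∀ s : Bool × Bool,
            (if (∀ v, ((Function.update c0 u (some s)) v).isSome = true ↔ v ∈ V') then
              ∑ V2 ∈ (H.W2 \ H.W1).powerset, ∑ gs ∈ H.choices (H.W1 ∪ V2),
                H.Bterm lam x (Function.update c0 u (some s)) V2 gs
            else 0) = ∑ V2 ∈ (H.W2 \ H.W1).powerset, ∑ gs ∈ H.choices (H.W1 ∪ V2),
                H.Bterm lam x (Function.update c0 u (some s)) V2 gs :=
          fun s => if_pos ((hPiff (some s)).mpr rfl)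
        rw [Finset.sum_congr rfl fun s _ => hsome s]
        rcases hbad with ⟨_, huW2, hMu⟩ | ⟨huW2, huW1, hMu⟩ | ⟨huW1, hMu⟩
        · rw [Finset.sum_comm]
          refine Finset.sum_eq_zero fun V2 hV2 => ?_
          rw [Finset.sum_comm]
          refine Finset.sum_eq_zero fun gs hgs => ?_
          exact caseA H lam x c0 huV' huW2 hMu (Finset.mem_powerset.mp hV2) hgs
        · have hmem : u ∈ H.W2 \ H.W1 := Finset.mem_sdiff.mpr ⟨huW2, huW1⟩
          have hres : ∀ s : Bool × Bool,
              (∑ V2 ∈ (H.W2 \ H.W1).powerset, ∑ gs ∈ H.choices (H.W1 ∪ V2),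
                H.Bterm lam x (Function.update c0 u (some s)) V2 gs) =
              ∑ V2 ∈ ((H.W2 \ H.W1).erase u).powerset,
                ∑ gs ∈ H.choices (H.W1 ∪ V2),
                  (H.Bterm lam x (Function.update c0 u (some s)) V2 gs +
                    H.Bterm lam x (Function.update c0 u (some s)) (insert u V2)
                      (Function.update gs u (H.h u))) := by
            intro s
            conv_lhs => rw [← Finset.insert_erase hmem]
            rw [Finset.sum_powerset_insert (Finset.notMem_erase u _), ← Finset.sum_add_distrib]
            refine Finset.sum_congr rfl fun V2 hV2 => ?_
            have huV2 : u ∉ V2 :=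
              fun h => (Finset.notMem_erase u _) (Finset.mem_powerset.mp hV2 h)
            rw [sum_choices_insert H huW2 huW1 huV2
              (fun gs => H.Bterm lam x (Function.update c0 u (some s)) (insert u V2) gs),
              ← Finset.sum_add_distrib]
          rw [Finset.sum_congr rfl fun s _ => hres s, Finset.sum_comm]
          refine Finset.sum_eq_zero fun V2 hV2 => ?_
          rw [Finset.sum_comm]
          refine Finset.sum_eq_zero fun gs hgs => ?_
          have huV2 : u ∉ V2 :=
            fun h => (Finset.notMem_erase u _) (Finset.mem_powerset.mp hV2 h)
          have hV2' : V2 ⊆ H.W2 \ H.W1 :=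
            (Finset.mem_powerset.mp hV2).trans (Finset.erase_subset u _)
          exact caseB H lam x c0 huW2 huW1 hMu hV2' huV2 hgs
        · obtain ⟨e1, e2, hne12, hh⟩ := Finset.card_eq_two.mp (card_h_W1 H huW1)
          have hres : ∀ s : Bool × Bool,
              (∑ V2 ∈ (H.W2 \ H.W1).powerset, ∑ gs ∈ H.choices (H.W1 ∪ V2),
                H.Bterm lam x (Function.update c0 u (some s)) V2 gs) =
              ∑ V2 ∈ (H.W2 \ H.W1).powerset,
                ∑ gs ∈ (H.choices (H.W1 ∪ V2)).filter (fun gs => gs u = {e1}),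
                  (H.Bterm lam x (Function.update c0 u (some s)) V2 gs +
                    H.Bterm lam x (Function.update c0 u (some s)) V2
                      (Function.update gs u {e2})) :=
            fun s => Finset.sum_congr rfl fun V2 _ => sum_choices_pair H huW1 hh hne12
              (fun gs => H.Bterm lam x (Function.update c0 u (some s)) V2 gs)
          rw [Finset.sum_congr rfl fun s _ => hres s, Finset.sum_comm]
          refine Finset.sum_eq_zero fun V2 hV2 => ?_
          rw [Finset.sum_comm]
          refine Finset.sum_eq_zero fun gs hgs => ?_
          have hgs1 := Finset.mem_filter.mp hgs
          exact caseC H lam x c0 huW1 hMu (Finset.mem_powerset.mp hV2) hgs1.1 hh hne12 hgs1.2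
      · refine Finset.sum_eq_zero fun a _ => ?_
        rw [if_neg]
        intro hP
        exact hsupp fun v hv => by rw [← Function.update_of_ne hv a c0]; exact hP v
    unfold HData.Aval
    rw [← Equiv.sum_comp (Equiv.piSplitAt u (fun _ : V => Option (Bool × Bool))).symm,
      Fintype.sum_prod_type, Finset.sum_comm]
    refine Finset.sum_eq_zero fun g _ => ?_
    have hcomp : ∀ a : Option (Bool × Bool),
        (Equiv.piSplitAt u (fun _ : V => Option (Bool × Bool))).symm (a, g) =
          Function.update ((Equiv.piSplitAt u
            (fun _ : V => Option (Bool × Bool))).symm (none, g)) u a := by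
      intro a
      funext v
      by_cases hv : v = u
      · subst hv
        rw [Function.update_self]
        simp [Equiv.piSplitAt_symm_apply]
      · rw [Function.update_of_ne hv]
        simp [Equiv.piSplitAt_symm_apply, hv]
    rw [Finset.sum_congr rfl fun a _ => by rw [hcomp a]]
    exact key _

end HD

end AuxW2

/-- **Corollary.** If `W₂ ≠ V′` then `A(V′,h) = 0`. -/
theorem Aval_eq_zero_of_W2_ne {V : Type*} [Fintype V] [DecidableEq V]
    (G : LoopedDigraph V) (V' : Finset V) (H : HData G V')
    (hne : H.W2 ≠ V') :
    H.Aval (R := MvPolynomial (V × V) (Polynomial ℚ)) (MvPolynomial.C Polynomial.X)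
      (fun e => MvPolynomial.X e) = 0 :=
  AuxW2.Aval_eq_zero_of_bad H _ _ (AuxW2.exists_bad H hne)
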